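/- If q is a primitive N-th root of unity (so that d^N = 0 and [N choose k]_q = 0 for 0 < k < N), then the N-th power of the covariant differential reduces to multiplication by the curvature: D^N Φ = (D^{N−1} A) Φ for all Φ. -/
import Mathlib

noncomputable def qb (q : ℂ) : ℕ → ℕ → ℂ
  | _, 0 => 1
  | 0, _+1 => 0
  | n+1, k+1 => qb q n k + q ^ (k+1) * qb q n (k+1)

lemma qb_zero (q : ℂ) (n : ℕ) : qb q n 0 = 1 := by cases n <;> rfl

lemma qb_succ (q : ℂ) (n k : ℕ) :
    qb q (n+1) (k+1) = qb q n k + q ^ (k+1) * qb q n (k+1) := rfl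

lemma qb_eq_zero_of_lt (q : ℂ) : ∀ {n k : ℕ}, n < k → qb q n k = 0 := by
  intro n
  induction n with
  | zero => intro k hk; match k, hk with
    | k+1, _ => rfl
  | succ n ih =>
    intro k hk
    match k, hk with
    | k+1, hk =>
      rw [qb_succ, ih (by omega), ih (by omega)]; ring

lemma qb_diag (q : ℂ) : ∀ n, qb q n n = 1 := by
  intro n
  induction n with
  | zero => rfl
  | succ n ih =>
    rw [qb_succ, ih, qb_eq_zero_of_lt q (Nat.lt_succ_self n)]; ring

noncomputable def qP (q : ℂ) (n : ℕ) : ℂ := ∏ i ∈ Finset.range n, (1 - q ^ (i+1))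

lemma qP_zero (q : ℂ) : qP q 0 = 1 := by simp [qP]

lemma qP_succ (q : ℂ) (n : ℕ) : qP q (n+1) = qP q n * (1 - q ^ (n+1)) := by
  simp [qP, Finset.prod_range_succ]

lemma qb_mul_prod (q : ℂ) : ∀ n k, k ≤ n →
    qb q n k * (qP q k * qP q (n - k)) = qP q n := by
  intro n
  induction n with
  | zero =>
    intro k hk
    have : k = 0 := Nat.le_zero.mp hk
    subst this
    simp [qb_zero, qP_zero]
  | succ n ih =>
    intro k hk
    match k with
    | 0 => simp [qb_zero, qP_zero]
    | k+1 =>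
      have hsub : n + 1 - (k+1) = n - k := by omega
      rw [qb_succ, hsub, qP_succ]
      rcases Nat.lt_or_ge k n with hkn | hkn
      · have hnk : n - k = (n - (k+1)) + 1 := by omega
        have h2 : qP q (n - k) = qP q (n - (k+1)) * (1 - q ^ (n - k)) := by
          rw [hnk, qP_succ, ← hnk]
        have e1 := ih k (by omega)
        have e2 := ih (k+1) hkn
        rw [h2] at e1
        rw [qP_succ] at e2
        have hpow : q ^ (k+1) * q ^ (n - k) = q ^ (n+1) := by
          rw [← pow_add]; congr 1; omega
        rw [qP_succ, h2, ← hpow]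
        linear_combination (1 - q^(k+1)) * e1 + q^(k+1) * (1 - q^(n-k)) * e2
      · have hkn' : k = n := by omega
        subst hkn'
        rw [qb_eq_zero_of_lt q (Nat.lt_succ_self k), qb_diag, Nat.sub_self, qP_zero,
          qP_succ]
        ring


/-- in the setting of the covariant `q`-differential `D Φ = d Φ + A Φ`
(graded algebra `𝒜` acting on a module `H`, `d` obeying the `q`-Leibniz rule), if `q` is
a primitive `N`-th root of unity and `d^N = 0` on the module, then
`D^N Φ = (D^{N−1} A) Φ` for all `Φ`, i.e. `D^N` is multiplication by the curvature. -/
theorem covariant_power_curvature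
    (q : ℂ) (𝒜 : Type*) [Ring 𝒜] [Algebra ℂ 𝒜]
    (H : Type*) [AddCommGroup H] [Module ℂ H] [Module 𝒜 H] [IsScalarTower ℂ 𝒜 H]
    -- the grading of 𝒜
    (G : ℕ → Set 𝒜)
    (hGadd : ∀ p, ∀ X ∈ G p, ∀ Y ∈ G p, X + Y ∈ G p)
    (hGmul : ∀ p r, ∀ X ∈ G p, ∀ Y ∈ G r, X * Y ∈ G (p + r))
    -- the q-differential on the algebra and on the module
    (dA : 𝒜 →ₗ[ℂ] 𝒜) (hdeg : ∀ p, ∀ X ∈ G p, dA X ∈ G (p + 1))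
    (dH : H →ₗ[ℂ] H)
    (hLeibA : ∀ p, ∀ X ∈ G p, ∀ Y : 𝒜, dA (X * Y) = dA X * Y + q ^ p • (X * dA Y))
    (hLeibH : ∀ p, ∀ X ∈ G p, ∀ Φ : H, dH (X • Φ) = dA X • Φ + q ^ p • (X • dH Φ))
    -- the connection one-form and the covariant differentials
    (Acon : 𝒜) (hA : Acon ∈ G 1)
    (D : H → H) (hD : ∀ Φ, D Φ = dH Φ + Acon • Φ)
    (DA : 𝒜 → 𝒜) (hDA : ∀ X, DA X = dA X + Acon * X)
    -- q is a primitive N-th root of unity and d^N = 0 on the module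
    (N : ℕ) (hN : 1 ≤ N) (hq : IsPrimitiveRoot q N)
    (hdN : ∀ Φ : H, (⇑dH)^[N] Φ = 0) :
    ∀ Φ : H, D^[N] Φ = (DA^[N - 1] Acon) • Φ := by
  -- the Gaussian binomials vanish at a primitive root
  have hP_ne : ∀ m, m < N → qP q m ≠ 0 := by
    intro m hm
    rw [qP]
    apply Finset.prod_ne_zero_iff.mpr
    intro i hi
    rw [Finset.mem_range] at hi
    have h1 : q ^ (i+1) ≠ 1 := hq.pow_ne_one_of_pos_of_lt (by omega) (by omega)
    intro h
    exact h1 (sub_eq_zero.mp h).symm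
  have hPN : qP q N = 0 := by
    obtain ⟨M, rfl⟩ : ∃ M, N = M + 1 := ⟨N - 1, by omega⟩
    rw [qP_succ, hq.pow_eq_one]
    ring
  have hvan : ∀ k, 0 < k → k < N → qb q N k = 0 := by
    intro k h1 h2
    have h := qb_mul_prod q N k (le_of_lt h2)
    rw [hPN] at h
    rcases mul_eq_zero.mp h with h' | h'
    · exact h'
    · rcases mul_eq_zero.mp h' with h'' | h''
      · exact absurd h'' (hP_ne k h2)
      · exact absurd h'' (hP_ne (N - k) (by omega))
  -- scalar commutation
  have hcomm : ∀ (c : ℂ) (a : 𝒜) (x : H), a • (c • x) = c • (a • x) := by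
    intro c a x
    have h1 : c • x = (c • (1:𝒜)) • x := by rw [smul_assoc, one_smul]
    rw [h1, ← mul_smul, mul_smul_comm, mul_one, smul_assoc]
  -- the iterated covariant derivatives of the connection
  set B : ℕ → 𝒜 := fun k => DA^[k] Acon with hB
  have hB0 : B 0 = Acon := rfl
  have hBsucc : ∀ k, B (k+1) = dA (B k) + Acon * B k := by
    intro k
    show DA^[k+1] Acon = _
    rw [Function.iterate_succ_apply', hDA]
  have hBdeg : ∀ k, B k ∈ G (k+1) := by
    intro k
    induction k with
    | zero => exact hA
    | succ k ih =>
      rw [hBsucc]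
      apply hGadd
      · exact hdeg (k+1) (B k) ih
      · have := hGmul 1 (k+1) Acon hA (B k) ih
        rwa [show 1 + (k+1) = k + 1 + 1 by omega] at this
  -- the key expansion of D^[n]
  have key : ∀ n, 1 ≤ n → ∀ Φ : H, D^[n] Φ =
      (⇑dH)^[n] Φ + ∑ k ∈ Finset.range n, qb q n (k+1) • (B k • (⇑dH)^[n - 1 - k] Φ) := by
    intro n hn
    induction n with
    | zero => omega
    | succ m ih =>
      rcases Nat.eq_zero_or_pos m with hm | hm
      · subst hm
        intro Φ
        have hq11 : qb q 1 1 = 1 := by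
          rw [qb_succ, qb_zero, qb_eq_zero_of_lt q Nat.zero_lt_one]; ring
        simp [hD, hq11, hB0]
      · -- inductive step
        obtain ⟨p, rfl⟩ : ∃ p, m = p + 1 := ⟨m - 1, by omega⟩
        set m := p + 1 with hmp
        intro Φ
        rw [Function.iterate_succ_apply', ih (by omega) Φ, hD, map_add, map_sum, smul_add,
          Finset.smul_sum]
        simp only [Nat.add_sub_cancel, show ∀ k, m - 1 - k = p - k from fun k => by omega]
        have hiter : ∀ x : H, dH ((⇑dH)^[m] x) = (⇑dH)^[m+1] x := fun x =>
          (Function.iterate_succ_apply' _ _ _).symm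
        rw [hiter]
        -- the dH-part of each term
        have hterm1 : ∀ k ∈ Finset.range m,
            dH (qb q m (k+1) • (B k • (⇑dH)^[p - k] Φ)) =
              qb q m (k+1) • (dA (B k) • (⇑dH)^[p - k] Φ)
              + (qb q m (k+1) * q ^ (k+1)) • (B k • (⇑dH)^[m - k] Φ) := by
          intro k hk
          rw [Finset.mem_range] at hk
          rw [map_smul, hLeibH (k+1) (B k) (hBdeg k)]
          have e2 : dH ((⇑dH)^[p - k] Φ) = (⇑dH)^[m - k] Φ := by
            rw [← Function.iterate_succ_apply' dH (p - k) Φ]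
            congr 1
            omega
          rw [e2, smul_add, smul_smul]
        rw [Finset.sum_congr rfl hterm1, Finset.sum_add_distrib]
        -- the Acon-part of each term
        have hterm2 : ∀ k ∈ Finset.range m,
            Acon • (qb q m (k+1) • (B k • (⇑dH)^[p - k] Φ)) =
              qb q m (k+1) • ((Acon * B k) • (⇑dH)^[p - k] Φ) := by
          intro k _
          rw [hcomm, ← mul_smul]
        rw [Finset.sum_congr rfl hterm2]
        -- reindex the RHS sum
        have hRHS : ∑ k ∈ Finset.range (m+1), qb q (m+1) (k+1) • (B k • (⇑dH)^[m - k] Φ)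
            = ∑ k ∈ Finset.range m, qb q (m+1) (k+1+1) • (B (k+1) • (⇑dH)^[p - k] Φ)
              + qb q (m+1) 1 • (Acon • (⇑dH)^[m] Φ) := by
          rw [Finset.sum_range_succ']
          congr 1
          · apply Finset.sum_congr rfl
            intro k hk
            have : m - (k+1) = p - k := by omega
            rw [this]
        -- reindex the "q-shift" sum on the LHS
        have hC : ∑ k ∈ Finset.range m,
              (qb q m (k+1) * q ^ (k+1)) • (B k • (⇑dH)^[m - k] Φ)
            = ∑ k ∈ Finset.range m,
                (qb q m (k+1+1) * q ^ (k+1+1)) • (B (k+1) • (⇑dH)^[p - k] Φ)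
              + (qb q m 1 * q) • (Acon • (⇑dH)^[m] Φ) := by
          rw [hmp, Finset.sum_range_succ']
          congr 1
          · rw [Finset.sum_range_succ, qb_eq_zero_of_lt q (by omega : p + 1 < p + 1 + 1),
              zero_mul, zero_smul, add_zero]
            apply Finset.sum_congr rfl
            intro k hk
            have : p + 1 - (k+1) = p - k := by omega
            rw [this]
          · rw [hB0, pow_one, Nat.sub_zero]
        rw [hC, hRHS]
        -- combine dA-part and Acon-part termwise
        have hAB : ∑ k ∈ Finset.range m, qb q m (k+1) • (dA (B k) • (⇑dH)^[p - k] Φ)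
              + ∑ k ∈ Finset.range m, qb q m (k+1) • ((Acon * B k) • (⇑dH)^[p - k] Φ)
            = ∑ k ∈ Finset.range m, qb q m (k+1) • (B (k+1) • (⇑dH)^[p - k] Φ) := by
          rw [← Finset.sum_add_distrib]
          apply Finset.sum_congr rfl
          intro k _
          rw [← smul_add, ← add_smul, ← hBsucc]
        have hsum : ∑ k ∈ Finset.range m, qb q m (k+1) • (B (k+1) • (⇑dH)^[p - k] Φ)
              + ∑ k ∈ Finset.range m,
                  (qb q m (k+1+1) * q ^ (k+1+1)) • (B (k+1) • (⇑dH)^[p - k] Φ)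
            = ∑ k ∈ Finset.range m, qb q (m+1) (k+1+1) • (B (k+1) • (⇑dH)^[p - k] Φ) := by
          rw [← Finset.sum_add_distrib]
          apply Finset.sum_congr rfl
          intro k _
          rw [← add_smul]
          congr 1
          rw [qb_succ q m (k+1)]
          ring
        have h0 : Acon • (⇑dH)^[m] Φ + (qb q m 1 * q) • (Acon • (⇑dH)^[m] Φ)
            = qb q (m+1) 1 • (Acon • (⇑dH)^[m] Φ) := by
          rw [show qb q (m+1) 1 = qb q m 0 + q ^ 1 * qb q m 1 from qb_succ q m 0,
            qb_zero, add_smul, one_smul, pow_one, mul_comm]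
        rw [← hsum, ← hAB, ← h0]
        abel
  -- conclude
  intro Φ
  obtain ⟨M, rfl⟩ : ∃ M, N = M + 1 := ⟨N - 1, by omega⟩
  rw [key (M+1) hN Φ, hdN Φ, zero_add, Finset.sum_range_succ]
  rw [Finset.sum_eq_zero, zero_add]
  · rw [qb_diag, one_smul]
    have : M + 1 - 1 - M = 0 := by omega
    rw [this, Function.iterate_zero_apply]
    rfl
  · intro k hk
    rw [Finset.mem_range] at hk
    rw [hvan (k+1) (by omega) (by omega), zero_smul]
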